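/- Let f_i, f_j ∈ ℝ^k be unit vectors with |⟨f_i, f_j⟩| < 1, and let d_i, d_j ∈ ℝ^k satisfy ⟨f_i, d_i⟩ = ⟨f_j, d_j⟩ = 0. Then the function t ↦ (2/π) arcsin( ⟨(f_i + t d_i)/‖f_i + t d_i‖, (f_j + t d_j)/‖f_j + t d_j‖⟩ ) is differentiable at t = 0 with derivative (2/π) · (⟨f_i, d_j⟩ + ⟨f_j, d_i⟩) / √(1 − ⟨f_i, f_j⟩²). -/

import Mathlib

open RealInnerProductSpace

lemma aux_norm_deriv {k : ℕ} (f d : EuclideanSpace ℝ (Fin k))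
    (hf : ‖f‖ = 1) (hd : ⟪f, d⟫ = 0) :
    HasDerivAt (fun t : ℝ => ‖f + t • d‖⁻¹ • (f + t • d)) d 0 := by
  have hu : HasDerivAt (fun t : ℝ => f + t • d) d 0 := by
    simpa using ((hasDerivAt_id (0:ℝ)).smul_const d).const_add f
  have hq : HasDerivAt (fun t : ℝ => ⟪f + t • d, f + t • d⟫) 0 0 := by
    have := hu.inner ℝ hu
    simpa [hd, real_inner_comm f d] using this
  have hnorm : HasDerivAt (fun t : ℝ => ‖f + t • d‖) 0 0 := by
    have heq : (fun t : ℝ => ‖f + t • d‖)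
        = fun t : ℝ => Real.sqrt ⟪f + t • d, f + t • d⟫ := by
      funext t
      rw [real_inner_self_eq_norm_mul_norm, Real.sqrt_mul_self (norm_nonneg _)]
    have hval : ⟪f + (0:ℝ) • d, f + (0:ℝ) • d⟫ = 1 := by
      rw [real_inner_self_eq_norm_mul_norm]
      simp [hf]
    have hs := (Real.hasDerivAt_sqrt (by rw [hval]; norm_num)).comp 0 hq
    rw [heq]
    exact hs.congr_deriv (by simp)
  have hinv : HasDerivAt (fun t : ℝ => ‖f + t • d‖⁻¹) 0 0 := by
    have h0 : ‖f + (0:ℝ) • d‖ ≠ 0 := by simp [hf]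
    exact (hnorm.inv h0).congr_deriv (by simp)
  have := hinv.smul hu
  exact this.congr_deriv (by simp [hf])

theorem stmt_17 (k : ℕ) (fi fj : EuclideanSpace ℝ (Fin k))
    (hfi : ‖fi‖ = 1) (hfj : ‖fj‖ = 1) (hij : |⟪fi, fj⟫| < 1)
    (di dj : EuclideanSpace ℝ (Fin k)) (hdi : ⟪fi, di⟫ = 0) (hdj : ⟪fj, dj⟫ = 0) :
    HasDerivAt
      (fun t : ℝ => (2 / Real.pi) *
        Real.arcsin ⟪(‖fi + t • di‖⁻¹) • (fi + t • di), (‖fj + t • dj‖⁻¹) • (fj + t • dj)⟫)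
      ((2 / Real.pi) * ((⟪fi, dj⟫ + ⟪fj, di⟫) / Real.sqrt (1 - ⟪fi, fj⟫ ^ 2)))
      0 := by
  have hui := aux_norm_deriv fi di hfi hdi
  have huj := aux_norm_deriv fj dj hfj hdj
  have hg : HasDerivAt (fun t : ℝ =>
      ⟪(‖fi + t • di‖⁻¹) • (fi + t • di), (‖fj + t • dj‖⁻¹) • (fj + t • dj)⟫)
      (⟪fi, dj⟫ + ⟪di, fj⟫) 0 := by
    have := hui.inner ℝ huj
    simpa [hfi, hfj] using this
  have habs := abs_lt.mp hij
  have harc0 := Real.hasDerivAt_arcsin (ne_of_gt habs.1) (ne_of_lt habs.2)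
  have hval0 : ⟪(‖fi + (0:ℝ) • di‖⁻¹) • (fi + (0:ℝ) • di),
      (‖fj + (0:ℝ) • dj‖⁻¹) • (fj + (0:ℝ) • dj)⟫ = ⟪fi, fj⟫ := by
    simp [hfi, hfj]
  rw [← hval0] at harc0
  have harc := harc0.comp 0 hg
  rw [hval0] at harc
  have := harc.const_mul (2 / Real.pi)
  refine this.congr_deriv ?_
  rw [real_inner_comm di fj]
  ring
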